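/- For any even prime power q = 2^m, and for all integers n, k with 1 ≤ n ≤ 2^{m−1} and 1 ≤ k ≤ n, there exists an MDS LCD [n,k] code over F_q, i.e., a k-dimensional LCD subspace of F_q^n with minimum distance n − k + 1. -/

import Mathlib

/-- The Euclidean dual of a code `C ⊆ R^n`:
`C^⊥ = {x : x · c = 0 for all c ∈ C}` where `x · y = ∑ i, x i * y i`. -/
def dualCode {R : Type*} [CommRing R] {n : ℕ} (C : Submodule R (Fin n → R)) :
    Submodule R (Fin n → R) where
  carrier := {x | ∀ c ∈ C, ∑ i, x i * c i = 0}
  zero_mem' := by intro c hc; simp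
  add_mem' := by
    intro a b ha hb c hc
    have h1 := ha c hc
    have h2 := hb c hc
    simp only [Pi.add_apply, add_mul, Finset.sum_add_distrib, h1, h2, add_zero]
  smul_mem' := by
    intro r x hx c hc
    have h1 := hx c hc
    simp only [Pi.smul_apply, smul_eq_mul, mul_assoc, ← Finset.mul_sum, h1, mul_zero]

/-- A code is LCD (linear complementary dual) if `C ∩ C^⊥ = {0}`. -/
def IsLCD {R : Type*} [CommRing R] {n : ℕ} (C : Submodule R (Fin n → R)) : Prop :=
  C ⊓ dualCode C = ⊥

open Classical in
/-- The Hamming weight of a vector: the number of nonzero coordinates. -/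
noncomputable def wt {R : Type*} [Zero R] {n : ℕ} (x : Fin n → R) : ℕ :=
  (Finset.univ.filter fun i => x i ≠ 0).card

/-- `C` has minimum distance `d`: some nonzero codeword has weight `d`
and every nonzero codeword has weight at least `d`. -/
def hasMinDist {F : Type*} [Field F] {n : ℕ} (C : Submodule F (Fin n → F)) (d : ℕ) : Prop :=
  (∃ c ∈ C, c ≠ 0 ∧ wt c = d) ∧ ∀ c ∈ C, c ≠ 0 → d ≤ wt c


section Helpers
open Finset Matrix
variable {F : Type*} [Field F]


lemma det_add_smul_rankOne {k : ℕ} (A : Matrix (Fin k) (Fin k) F) (u : Fin k → F) :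
    ∃ p q : F, ∀ t : F,
      (A + t • Matrix.of (fun a b => u a * u b)).det = t * p + q := by
  classical
  set m₁ : Fin k → (Fin k → F) := fun a => u a • u with hm₁
  set D : Finset (Fin k) → F := fun s => Matrix.det (Matrix.of fun a b => s.piecewise m₁ A a b)
    with hD
  have h1 : ∀ t : F, (A + t • Matrix.of fun a b => u a * u b).det
      = ∑ s : Finset (Fin k), t ^ s.card * D s := by
    intro t
    have e : (A + t • Matrix.of fun a b => u a * u b) =
        Matrix.of fun a b => ((fun a => t • m₁ a) + fun a => A a) a b := by
      ext a b
      simp [hm₁, mul_comm, mul_assoc]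
      ring
    rw [e]
    have h2 := (Matrix.detRowAlternating (R := F) (n := Fin k)).toMultilinearMap.map_add_univ
      (fun a => t • m₁ a) (fun a => A a)
    have h3 : Matrix.det (Matrix.of fun a b => ((fun a => t • m₁ a) + fun a => A a) a b)
        = (Matrix.detRowAlternating (R := F) (n := Fin k)).toMultilinearMap
          ((fun a => t • m₁ a) + fun a => A a) := rfl
    rw [h3, h2]
    refine Finset.sum_congr rfl fun s _ => ?_
    have h4 := MultilinearMap.map_piecewise_smul
      (Matrix.detRowAlternating (R := F) (n := Fin k)).toMultilinearMap
      (fun _ => t) (s.piecewise m₁ fun a => A a) s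
    have e2 : s.piecewise (fun i => (fun _ => t) i • s.piecewise m₁ (fun a => A a) i)
        (s.piecewise m₁ fun a => A a) = s.piecewise (fun a => t • m₁ a) fun a => A a := by
      ext j b
      by_cases hj : j ∈ s <;> simp [Finset.piecewise, hj]
    rw [e2] at h4
    rw [h4, Finset.prod_const, smul_eq_mul]
    rfl
  have h2 : ∀ s : Finset (Fin k), 1 < s.card → D s = 0 := by
    intro s hs
    obtain ⟨a, ha, b, hb, hab⟩ := Finset.one_lt_card.mp hs
    set N : Matrix (Fin k) (Fin k) F := Matrix.of fun a b => s.piecewise m₁ A a b with hN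
    have hNa : N a = u a • u := by
      ext j; simp [hN, Finset.piecewise, ha, hm₁]
    have hNb : N b = u b • u := by
      ext j; simp [hN, Finset.piecewise, hb, hm₁]
    show N.det = 0
    by_cases hu : u a = 0
    · refine Matrix.det_eq_zero_of_row_eq_zero a fun j => ?_
      have := congrFun hNa j
      simp [hu] at this
      exact this
    · have hb' : N b = (u b * (u a)⁻¹) • N a := by
        rw [hNa, hNb]
        ext j
        simp [smul_eq_mul]
        field_simp
      calc N.det = (N.updateRow b ((u b * (u a)⁻¹) • N a)).det := by
              rw [← hb', Matrix.updateRow_eq_self]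
        _ = (u b * (u a)⁻¹) * (N.updateRow b (N a)).det := Matrix.det_updateRow_smul N b _ _
        _ = 0 := by rw [Matrix.det_updateRow_eq_zero hab, mul_zero]
  refine ⟨∑ s : Finset (Fin k), if s.card = 1 then D s else 0, D ∅, fun t => ?_⟩
  rw [h1]
  have step : ∀ s : Finset (Fin k), t ^ s.card * D s =
      (t * if s.card = 1 then D s else 0) + (if s = ∅ then D s else 0) := by
    intro s
    by_cases h0 : s = ∅
    · subst h0; simp
    · have hc0 : s.card ≠ 0 := by simpa [Finset.card_eq_zero] using h0
      by_cases hc1 : s.card = 1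
      · simp [hc1, h0]
      · have hlt : 1 < s.card := by omega
        simp [h2 s hlt, hc1, h0]
  rw [Finset.sum_congr rfl (fun s _ => step s), Finset.sum_add_distrib, ← Finset.mul_sum]
  congr 1
  simp

noncomputable def momM (k : ℕ) {n : ℕ} (α w : Fin n → F) : Matrix (Fin k) (Fin k) F :=
  Matrix.of fun a b => ∑ i, w i * (α i ^ (a : ℕ) * α i ^ (b : ℕ))

lemma sum_update_mul {n : ℕ} (w : Fin n → F) (i : Fin n) (t : F) (g : Fin n → F) :
    ∑ j, Function.update w i t j * g j = t * g i + ∑ j ∈ Finset.univ.erase i, w j * g j := by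
  rw [← Finset.add_sum_erase _ _ (Finset.mem_univ i)]
  congr 1
  · simp
  · refine Finset.sum_congr rfl fun j hj => ?_
    rw [Function.update_of_ne (Finset.mem_erase.mp hj).1]

lemma momM_update (k : ℕ) {n : ℕ} (α w : Fin n → F) (i : Fin n) (t : F) :
    momM k α (Function.update w i t) =
      momM k α (Function.update w i 0) +
        t • Matrix.of (fun a b : Fin k => (α i ^ (a : ℕ)) * (α i ^ (b : ℕ))) := by
  ext a b
  simp only [momM, Matrix.add_apply, Matrix.smul_apply, Matrix.of_apply, smul_eq_mul]
  rw [sum_update_mul, sum_update_mul]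
  ring

lemma sum_indicator_lt {M : Type*} [AddCommMonoid M] {n k : ℕ} (hk : k ≤ n) (g : Fin n → M) :
    ∑ i : Fin n, (if (i : ℕ) < k then g i else 0) = ∑ j : Fin k, g (Fin.castLE hk j) := by
  classical
  rw [← Finset.sum_filter]
  have : Finset.univ.filter (fun i : Fin n => (i : ℕ) < k) =
      Finset.univ.map ⟨Fin.castLE hk, Fin.castLE_injective hk⟩ := by
    ext i
    simp only [Finset.mem_filter, Finset.mem_univ, true_and, Finset.mem_map,
      Function.Embedding.coeFn_mk]
    constructor
    · intro h; exact ⟨⟨(i : ℕ), h⟩, Fin.ext rfl⟩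
    · rintro ⟨j, rfl⟩; exact j.isLt
  rw [this, Finset.sum_map]
  rfl

lemma momM_indicator_det_ne_zero {k n : ℕ} [Fintype F] (hk : k ≤ n) (α : Fin n ↪ F) :
    (momM k (⇑α) (fun i => if (i : ℕ) < k then 1 else 0)).det ≠ 0 := by
  classical
  set β : Fin k → F := fun j => α (Fin.castLE hk j) with hβ
  set V : Matrix (Fin k) (Fin k) F := (Matrix.vandermonde β)ᵀ with hV
  have hM : momM k (⇑α) (fun i => if (i : ℕ) < k then 1 else 0) = V * Vᵀ := by
    ext a b
    simp only [momM, Matrix.mul_apply, Matrix.of_apply, Matrix.transpose_apply,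
      Matrix.vandermonde, hV, hβ]
    rw [← sum_indicator_lt hk (fun i => α i ^ (a : ℕ) * α i ^ (b : ℕ))]
    refine Finset.sum_congr rfl fun i _ => ?_
    split <;> simp
  have hβinj : Function.Injective β := fun i j h => Fin.castLE_injective hk (α.injective h)
  have hv : (Matrix.vandermonde β).det ≠ 0 := by
    rw [Matrix.det_vandermonde]
    refine Finset.prod_ne_zero_iff.mpr fun i _ => Finset.prod_ne_zero_iff.mpr fun j hj => ?_
    refine sub_ne_zero_of_ne fun h => ?_
    have hji : j = i := hβinj h
    rw [hji] at hj
    exact absurd hj (by simp)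
  rw [hM, Matrix.det_mul]
  simp only [hV, Matrix.det_transpose, Matrix.transpose_transpose]
  exact mul_ne_zero hv hv

lemma exists_ne_zero_of_multiaffine [Fintype F] {n : ℕ} (f : (Fin n → F) → F)
    (haff : ∀ (w : Fin n → F) (i : Fin n), ∃ p q : F, ∀ t, f (Function.update w i t) = t * p + q)
    (hF : 3 ≤ Fintype.card F)
    (w₀ : Fin n → F) (h0 : f w₀ ≠ 0) :
    ∃ w : Fin n → F, (∀ i, w i ≠ 0) ∧ f w ≠ 0 := by
  classical
  obtain ⟨t₁, ht₁m, t₂, ht₂m, ht12⟩ :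
      ∃ t₁ ∈ (Finset.univ.erase (0 : F)), ∃ t₂ ∈ (Finset.univ.erase (0 : F)), t₁ ≠ t₂ := by
    apply Finset.one_lt_card.mp
    rw [Finset.card_erase_of_mem (Finset.mem_univ _), Finset.card_univ]
    omega
  have ht1 : t₁ ≠ 0 := (Finset.mem_erase.mp ht₁m).1
  have ht2 : t₂ ≠ 0 := (Finset.mem_erase.mp ht₂m).1
  suffices H : ∀ N (w : Fin n → F), (Finset.univ.filter fun i => w i = 0).card ≤ N → f w ≠ 0 →
      ∃ w', (∀ i, w' i ≠ 0) ∧ f w' ≠ 0 from H _ w₀ le_rfl h0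
  intro N
  induction N with
  | zero =>
    intro w hw hfw
    refine ⟨w, fun i => ?_, hfw⟩
    intro h
    have : i ∈ Finset.univ.filter fun i => w i = 0 := by simp [h]
    have := Finset.card_pos.mpr ⟨i, this⟩
    omega
  | succ N ih =>
    intro w hw hfw
    by_cases hz : ∃ i, w i = 0
    · obtain ⟨i, hi⟩ := hz
      obtain ⟨p, q, hpq⟩ := haff w i
      have hfwq : f w = q := by
        have := hpq 0
        rw [zero_mul, zero_add] at this
        rw [← this]
        congr 1
        rw [← hi, Function.update_eq_self]
      have hq : q ≠ 0 := hfwq ▸ hfw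
      have hex : ∃ t : F, t ≠ 0 ∧ t * p + q ≠ 0 := by
        by_cases hp : p = 0
        · exact ⟨t₁, ht1, by simp [hp, hq]⟩
        · by_cases h1 : t₁ * p + q = 0
          · refine ⟨t₂, ht2, fun h2 => ht12 ?_⟩
            have := h1.trans h2.symm
            have := add_right_cancel this
            exact mul_right_cancel₀ hp this
          · exact ⟨t₁, ht1, h1⟩
      obtain ⟨t, ht, htpq⟩ := hex
      apply ih (Function.update w i t)
      · have hset : (Finset.univ.filter fun j => Function.update w i t j = 0) =
            (Finset.univ.filter fun j => w j = 0).erase i := by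
          ext j
          by_cases hj : j = i
          · subst hj; simp [ht]
          · simp [Function.update_of_ne hj, hj]
        rw [hset]
        have hiN : i ∈ Finset.univ.filter fun j => w j = 0 := by simp [hi]
        rw [Finset.card_erase_of_mem hiN]
        have := Finset.card_pos.mpr ⟨i, hiN⟩
        omega
      · rw [hpq t]; exact htpq
    · push_neg at hz
      exact ⟨w, hz, hfw⟩

lemma exists_good_w [Fintype F] {k n : ℕ} (hk : k ≤ n)
    (hcard : k < n → 3 ≤ Fintype.card F) (α : Fin n ↪ F) :
    ∃ w : Fin n → F, (∀ i, w i ≠ 0) ∧ (momM k (⇑α) w).det ≠ 0 := by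
  rcases eq_or_lt_of_le hk with rfl | hlt
  · refine ⟨fun _ => 1, fun _ => one_ne_zero, ?_⟩
    have h := momM_indicator_det_ne_zero (le_refl k) α
    have e : (fun i : Fin k => if (i : ℕ) < k then (1 : F) else 0) = fun _ => 1 := by
      funext i; simp [i.isLt]
    rwa [e] at h
  · refine exists_ne_zero_of_multiaffine (fun w => (momM k (⇑α) w).det) ?_ (hcard hlt)
      (fun i => if (i : ℕ) < k then 1 else 0) (momM_indicator_det_ne_zero hk α)
    intro w i
    obtain ⟨p, q, h⟩ := det_add_smul_rankOne (momM k (⇑α) (Function.update w i 0))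
      (fun a : Fin k => α i ^ (a : ℕ))
    exact ⟨p, q, fun t => by show (momM k (⇑α) (Function.update w i t)).det = _; rw [momM_update, h]⟩

open Polynomial in
lemma card_eval_zero_le [DecidableEq F] {n : ℕ} (α : Fin n ↪ F) {f : F[X]} (hf : f ≠ 0) :
    (Finset.univ.filter fun i => f.eval (α i) = 0).card ≤ f.natDegree := by
  classical
  have h1 : ∀ i ∈ Finset.univ.filter (fun i => f.eval (α i) = 0),
      α i ∈ f.roots.toFinset := by
    intro i hi
    rw [Multiset.mem_toFinset, Polynomial.mem_roots hf]
    exact (Finset.mem_filter.mp hi).2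
  calc (Finset.univ.filter fun i => f.eval (α i) = 0).card
      ≤ f.roots.toFinset.card :=
        Finset.card_le_card_of_injOn (fun i => α i) h1 fun a _ b _ h => α.injective h
    _ ≤ Multiset.card f.roots := f.roots.toFinset_card_le
    _ ≤ f.natDegree := f.card_roots'

lemma filter_lt_eq_map {n k : ℕ} (hk : k ≤ n) :
    (Finset.univ.filter fun i : Fin n => (i : ℕ) < k) =
      Finset.univ.map ⟨Fin.castLE hk, Fin.castLE_injective hk⟩ := by
  ext i
  simp only [Finset.mem_filter, Finset.mem_univ, true_and, Finset.mem_map,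
    Function.Embedding.coeFn_mk]
  constructor
  · intro h; exact ⟨⟨(i : ℕ), h⟩, Fin.ext rfl⟩
  · rintro ⟨j, rfl⟩; exact j.isLt

lemma wt_eq {R : Type*} [Zero R] {n : ℕ} (x : Fin n → R) [DecidablePred fun i => x i ≠ 0] :
    wt x = (Finset.univ.filter fun i => x i ≠ 0).card := by
  rw [wt]
  congr 1
  apply Finset.filter_congr_decidable

end Helpers

open Finset Matrix Polynomial in
/-- For any even prime power `q = 2^m` and all `1 ≤ n ≤ 2^(m-1)`, `1 ≤ k ≤ n`,
there exists an MDS LCD `[n, k]` code over `F_q`. -/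
theorem exists_mds_lcd_char_two {F : Type*} [Field F] [Fintype F] {m n k : ℕ}
    (hq : Fintype.card F = 2 ^ m)
    (hn1 : 1 ≤ n) (hn2 : n ≤ 2 ^ (m - 1)) (hk1 : 1 ≤ k) (hk2 : k ≤ n) :
    ∃ C : Submodule F (Fin n → F),
      Module.finrank F C = k ∧ IsLCD C ∧ hasMinDist C (n - k + 1) := by
  classical
  -- basic numerics
  have hm1 : 1 ≤ m := by
    rcases Nat.eq_zero_or_pos m with rfl | h
    · have := Fintype.one_lt_card (α := F)
      simp at hq
      omega
    · exact h
  have hcardn : n ≤ Fintype.card F := by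
    rw [hq]
    exact hn2.trans (Nat.pow_le_pow_right (by norm_num) (Nat.sub_le m 1))
  obtain ⟨α⟩ : Nonempty (Fin n ↪ F) :=
    Function.Embedding.nonempty_of_card_le (by simpa using hcardn)
  have hcard3 : k < n → 3 ≤ Fintype.card F := by
    intro hlt
    have hn2' : 2 ≤ n := by omega
    have hm2 : 2 ≤ m := by
      by_contra h
      push_neg at h
      interval_cases m <;> simp_all <;> omega
    rw [hq]
    calc (3:ℕ) ≤ 2 ^ 2 := by norm_num
      _ ≤ 2 ^ m := Nat.pow_le_pow_right (by norm_num) hm2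
  obtain ⟨w, hw, hdet⟩ := exists_good_w hk2 hcard3 α
  -- square roots of the weights
  set v : Fin n → F := fun i => w i ^ (2 ^ (m - 1)) with hv
  have hv2 : ∀ i, v i ^ 2 = w i := by
    intro i
    rw [hv, ← pow_mul]
    have h2m : 2 ^ (m - 1) * 2 = 2 ^ m := by
      conv_rhs => rw [← Nat.sub_add_cancel hm1]
      rw [pow_succ]
    rw [h2m, ← hq, FiniteField.pow_card]
  have hvne : ∀ i, v i ≠ 0 := fun i => pow_ne_zero _ (hw i)
  -- the generator matrix and the code
  set G : Matrix (Fin k) (Fin n) F := Matrix.of fun (a : Fin k) (i : Fin n) =>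
    v i * α i ^ (a : ℕ) with hG
  -- polynomial attached to a coefficient vector
  set fc : (Fin k → F) → F[X] := fun c => ∑ a : Fin k, C (c a) * X ^ (a : ℕ) with hfc
  have hfc_eval : ∀ (c : Fin k → F) (x : F),
      (fc c).eval x = ∑ a : Fin k, c a * x ^ (a : ℕ) := by
    intro c x
    rw [hfc]
    simp [eval_finset_sum]
  have hvecmul : ∀ (c : Fin k → F) (i : Fin n),
      (c ᵥ* G) i = v i * (fc c).eval (α i) := by
    intro c i
    rw [hfc_eval, Finset.mul_sum]
    simp only [Matrix.vecMul, dotProduct, hG, Matrix.of_apply]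
    refine Finset.sum_congr rfl fun a _ => by ring
  have hcoeff : ∀ (c : Fin k → F) (b : ℕ),
      (fc c).coeff b = if h : b < k then c ⟨b, h⟩ else 0 := by
    intro c b
    rw [hfc]
    rw [finset_sum_coeff]
    simp only [coeff_C_mul, coeff_X_pow, mul_ite, mul_one, mul_zero]
    split
    · rename_i h
      rw [Finset.sum_eq_single (⟨b, h⟩ : Fin k)]
      · simp
      · intro a _ ha
        rw [if_neg]
        intro h'
        exact ha (Fin.ext h'.symm)
      · simp
    · rename_i h
      refine Finset.sum_eq_zero fun a _ => ?_
      rw [if_neg]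
      intro h'
      have := a.isLt
      omega
  have hdegree : ∀ c : Fin k → F, (fc c).degree < (k : ℕ) := by
    intro c
    rw [degree_lt_iff_coeff_zero]
    intro b hb
    rw [hcoeff]
    rw [dif_neg]
    exact fun h => by omega
  have hfc0 : ∀ c : Fin k → F, fc c = 0 → c = 0 := by
    intro c h
    funext a
    have := hcoeff c a
    rw [h] at this
    simp only [coeff_zero] at this
    rw [dif_pos a.isLt] at this
    simpa using this.symm
  -- injectivity of the generator map
  have hker : ∀ c : Fin k → F, c ᵥ* G = 0 → c = 0 := by
    intro c hc
    have hev : ∀ i, (fc c).eval (α i) = 0 := by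
      intro i
      have h := congrFun hc i
      rw [hvecmul] at h
      exact (mul_eq_zero.mp h).resolve_left (hvne i)
    apply hfc0
    by_contra hfne
    have hcard := card_eval_zero_le α hfne
    have hfull : (Finset.univ.filter fun i => (fc c).eval (α i) = 0) = Finset.univ := by
      ext i; simp [hev i]
    rw [hfull, Finset.card_univ, Fintype.card_fin] at hcard
    have hnd : (fc c).natDegree < k := (natDegree_lt_iff_degree_lt hfne).mpr (hdegree c)
    omega
  have hinj : Function.Injective G.vecMulLinear := by
    rw [← LinearMap.ker_eq_bot, LinearMap.ker_eq_bot']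
    intro c hc
    exact hker c (by simpa using hc)
  refine ⟨LinearMap.range G.vecMulLinear, ?_, ?_, ?_, ?_⟩
  · -- rank
    rw [LinearMap.finrank_range_of_inj hinj]
    simp [Module.finrank_pi]
  · -- LCD
    rw [IsLCD, eq_bot_iff]
    intro x hx
    obtain ⟨hxC, hxD⟩ := Submodule.mem_inf.mp hx
    obtain ⟨c, rfl⟩ := hxC
    have hrow : ∀ a : Fin k, (fun i => G a i) ∈ LinearMap.range G.vecMulLinear := by
      intro a
      refine ⟨Pi.single a 1, ?_⟩
      funext i
      simp [Matrix.vecMul, dotProduct, Pi.single_apply, ite_mul]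
    have hM0 : (momM k (⇑α) w) *ᵥ c = 0 := by
      funext a
      have hd := hxD (fun i => G a i) (hrow a)
      simp only [Matrix.vecMulLinear_apply] at hd
      have swap : ∑ i, (c ᵥ* G) i * G a i = ∑ b, (momM k (⇑α) w a b) * c b := by
        simp only [Matrix.vecMul, dotProduct, Finset.sum_mul, momM, Matrix.of_apply,
          Finset.mul_sum]
        rw [Finset.sum_comm]
        refine Finset.sum_congr rfl fun b _ => Finset.sum_congr rfl fun i _ => ?_
        rw [← hv2 i, hG]
        simp only [Matrix.of_apply]
        ring
      have : (momM k (⇑α) w *ᵥ c) a = ∑ b, (momM k (⇑α) w a b) * c b := by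
        simp [Matrix.mulVec, dotProduct]
      rw [this, ← swap, hd]
      simp
    have hcz : c = 0 := by
      have hinjM := (Matrix.mulVec_injective_iff_isUnit (A := momM k (⇑α) w)).mpr
        ((Matrix.isUnit_iff_isUnit_det _).mpr hdet.isUnit)
      have := hinjM (a₁ := c) (a₂ := 0) (by simpa using hM0)
      exact this
    rw [hcz]
    simp
  · -- min weight attained
    set f₀ : F[X] := ∏ j ∈ Finset.univ.filter (fun j : Fin n => (j : ℕ) < k - 1),
      (X - C (α j)) with hf₀
    have hf₀monic : f₀.Monic := monic_prod_of_monic _ _ fun j _ => monic_X_sub_C (α j)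
    have hf₀ne : f₀ ≠ 0 := hf₀monic.ne_zero
    have hcardf : (Finset.univ.filter fun j : Fin n => (j : ℕ) < k - 1).card = k - 1 := by
      rw [filter_lt_eq_map (show k - 1 ≤ n by omega), Finset.card_map, Finset.card_univ,
        Fintype.card_fin]
    have hf₀deg : f₀.natDegree = k - 1 := by
      rw [hf₀, natDegree_prod _ _ fun j _ => X_sub_C_ne_zero (α j)]
      simp [hcardf]
    set c₀ : Fin k → F := fun a => f₀.coeff (a : ℕ) with hc₀
    have hfcc₀ : fc c₀ = f₀ := by
      show ∑ a : Fin k, C (c₀ a) * X ^ (a : ℕ) = f₀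
      rw [hc₀, Fin.sum_univ_eq_sum_range (fun b => C (f₀.coeff b) * X ^ b) k]
      conv_rhs => rw [f₀.as_sum_range' k (by omega)]
      simp [C_mul_X_pow_eq_monomial]
    set x₀ : Fin n → F := c₀ ᵥ* G with hx₀
    have hx₀i : ∀ i, x₀ i = v i * f₀.eval (α i) := by
      intro i
      rw [hx₀, hvecmul, hfcc₀]
    have hx₀zero : ∀ i : Fin n, x₀ i = 0 ↔ (i : ℕ) < k - 1 := by
      intro i
      rw [hx₀i i, mul_eq_zero]
      constructor
      · rintro (h | h)
        · exact absurd h (hvne i)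
        · rw [hf₀, eval_prod] at h
          obtain ⟨j, hj, hj0⟩ := Finset.prod_eq_zero_iff.mp h
          simp only [eval_sub, eval_X, eval_C] at hj0
          have : i = j := α.injective (sub_eq_zero.mp hj0)
          subst this
          exact (Finset.mem_filter.mp hj).2
      · intro h
        right
        rw [hf₀, eval_prod]
        refine Finset.prod_eq_zero (Finset.mem_filter.mpr ⟨Finset.mem_univ i, h⟩) ?_
        simp
    have hwt : wt x₀ = n - k + 1 := by
      rw [wt_eq]
      have : (Finset.univ.filter fun i => x₀ i ≠ 0) =
          Finset.univ.filter fun i : Fin n => ¬ ((i : ℕ) < k - 1) := by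
        ext i
        simp [hx₀zero i]
      rw [this]
      have hsum := Finset.card_filter_add_card_filter_not
        (s := (Finset.univ : Finset (Fin n))) (p := fun i : Fin n => (i : ℕ) < k - 1)
      beta_reduce at hsum
      rw [hcardf, Finset.card_univ, Fintype.card_fin] at hsum
      omega
    have hx₀ne : x₀ ≠ 0 := by
      intro h
      rw [h] at hwt
      have : wt (0 : Fin n → F) = 0 := by simp [wt]
      omega
    exact ⟨x₀, ⟨c₀, rfl⟩, hx₀ne, hwt⟩
  · -- lower bound on weight
    intro x hx hxne
    obtain ⟨c, rfl⟩ := hx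
    have hx0 : fc c ≠ 0 := by
      intro h
      apply hxne
      funext i
      simp only [Matrix.vecMulLinear_apply]
      rw [hvecmul, h]
      simp
    have hzero_le := card_eval_zero_le α hx0
    have hnd : (fc c).natDegree ≤ k - 1 := by
      have := (natDegree_lt_iff_degree_lt hx0).mpr (hdegree c)
      omega
    have hwt : wt (G.vecMulLinear c) =
        n - (Finset.univ.filter fun i => (fc c).eval (α i) = 0).card := by
      rw [wt_eq]
      have : (Finset.univ.filter fun i => G.vecMulLinear c i ≠ 0) =
          Finset.univ.filter fun i => ¬ ((fc c).eval (α i) = 0) := by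
        ext i
        simp only [Finset.mem_filter, Finset.mem_univ, true_and]
        rw [Matrix.vecMulLinear_apply, hvecmul]
        simp [hvne i]
      rw [this]
      have hsum := Finset.card_filter_add_card_filter_not
        (s := (Finset.univ : Finset (Fin n))) (p := fun i => (fc c).eval (α i) = 0)
      beta_reduce at hsum
      rw [Finset.card_univ, Fintype.card_fin] at hsum
      omega
    rw [hwt]
    omega
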